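/- Let G be a finite abelian group, G₀ ⊆ G a subset, and g ∈ G₀ \ {0} with g ∈ ⟨G₀ \ {g}⟩. Then for each prime p dividing ord(g), there exists an atom A ∈ A(G₀) such that 2 ≤ |supp(A)| ≤ r(G) + 1, 1 ≤ v_g(A) ≤ ord(g)/2, v_g(A) divides ord(g), and p does not divide v_g(A). -/

import Mathlib

/- Common definitions for zero-sum theory over a finite abelian group. -/

variable {G : Type*} [AddCommGroup G]

/-- `S` is a zero-sum sequence over the subset `G₀`:
a finite multiset of elements of `G₀` whose sum is `0`. -/
def IsZeroSumSeq (G₀ : Set G) (S : Multiset G) : Prop :=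
  (∀ g ∈ S, g ∈ G₀) ∧ S.sum = 0

/-- `A` is an atom (minimal zero-sum sequence) over `G₀`: a nonempty zero-sum
sequence over `G₀` that cannot be written as the union of two nonempty
zero-sum sequences, i.e. has no proper nonempty zero-sum subsequence. -/
def IsAtomOver (G₀ : Set G) (A : Multiset G) : Prop :=
  IsZeroSumSeq G₀ A ∧ A ≠ 0 ∧
    ∀ B : Multiset G, B ≤ A → B ≠ 0 → B ≠ A → B.sum ≠ 0

/-- The set of lengths `L(B)` of a zero-sum sequence `B` over `G₀`: all `k`
such that `B` is a union of `k` atoms over `G₀`. -/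
def lengthSet (G₀ : Set G) (B : Multiset G) : Set ℕ :=
  { k | ∃ f : Multiset (Multiset G), f.card = k ∧ (∀ A ∈ f, IsAtomOver G₀ A) ∧ f.sum = B }

/-- The set of successive distances `Δ(L)` of a set `L ⊆ ℕ`. -/
def distSet (L : Set ℕ) : Set ℕ :=
  { d | ∃ a ∈ L, ∃ b ∈ L, a < b ∧ b - a = d ∧ ∀ c ∈ L, a < c → c < b → False }

/-- The set of distances `Δ(G₀)`: union of `Δ(L(B))` over all nonempty
zero-sum sequences `B` over `G₀`. -/
def DeltaOf (G₀ : Set G) : Set ℕ :=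
  ⋃ B : Multiset G, ⋃ (_ : B ≠ 0), distSet (lengthSet G₀ B)

/-- The set of minimal distances `Δ*(G) = { min Δ(G₀) : G₀ ⊆ G, Δ(G₀) ≠ ∅ }`. -/
def DeltaStar (G : Type*) [AddCommGroup G] : Set ℕ :=
  { d | ∃ G₀ : Set G, (DeltaOf G₀).Nonempty ∧ sInf (DeltaOf G₀) = d }

/-- The cross number `k(S) = Σ_{g ∈ S} 1/ord(g)` (with multiplicity). -/
noncomputable def crossNumber (S : Multiset G) : ℚ :=
  (S.map fun g => ((addOrderOf g : ℚ))⁻¹).sum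

/-- `G₀` is an LCN-set: every atom over `G₀` has cross number at least `1`. -/
def IsLCNSet (G₀ : Set G) : Prop :=
  ∀ A : Multiset G, IsAtomOver G₀ A → 1 ≤ crossNumber A

/-- `r` is the rank of the finite abelian group `G`: the number of summands
in the invariant factor decomposition `G ≅ C_{n₁} ⊕ ... ⊕ C_{n_r}` with
`1 < n₁ ∣ n₂ ∣ ... ∣ n_r`. -/
def IsRank (G : Type*) [AddCommGroup G] (r : ℕ) : Prop :=
  ∃ d : Fin r → ℕ, (∀ i, 1 < d i) ∧ (∀ i j, i ≤ j → d i ∣ d j) ∧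
    Nonempty (G ≃+ ((i : Fin r) → ZMod (d i)))

/-- The system of sets of lengths `𝓛(G) = { L(B) : B ∈ 𝓑(G) nonempty }`. -/
def LSystem (G : Type*) [AddCommGroup G] : Set (Set ℕ) :=
  { L | ∃ B : Multiset G, B ≠ 0 ∧ IsZeroSumSeq (Set.univ : Set G) B ∧
      lengthSet (Set.univ : Set G) B = L }

/-- `d` is the greatest common divisor of the set `S ⊆ ℕ`. -/
def IsSetGcd (S : Set ℕ) (d : ℕ) : Prop :=
  (∀ s ∈ S, d ∣ s) ∧ ∀ e : ℕ, (∀ s ∈ S, e ∣ s) → e ∣ d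

set_option linter.unusedSectionVars false
set_option maxHeartbeats 1000000

section AuxiliaryLemmas



private lemma sum_negRep {G : Type*} [AddCommGroup G] [Fintype G] (T : Multiset G) :
    (T.bind fun t => Multiset.replicate (addOrderOf t - 1) t).sum = -T.sum := by
  induction T using Multiset.induction with
  | empty => simp
  | cons a T ih =>
    rw [Multiset.cons_bind, Multiset.sum_add, ih, Multiset.sum_cons, Multiset.sum_replicate]
    have h0 : addOrderOf a • a = 0 := addOrderOf_nsmul_eq_zero a
    have key : (addOrderOf a - 1) • a + a = 0 := by
      rw [← succ_nsmul, Nat.sub_add_cancel (addOrderOf_pos a)]; exact h0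
    have h2 : (addOrderOf a - 1) • a = -a := eq_neg_of_add_eq_zero_left key
    rw [h2, neg_add]

lemma exists_multiset_of_mem_closure {G : Type*} [AddCommGroup G] [Fintype G] {E : Set G} {x : G}
    (hx : x ∈ AddSubgroup.closure E) :
    ∃ T : Multiset G, (∀ t ∈ T, t ∈ E) ∧ T.sum = x := by
  let M : AddSubgroup G :=
  { carrier := {x | ∃ T : Multiset G, (∀ t ∈ T, t ∈ E) ∧ T.sum = x}
    zero_mem' := ⟨0, by simp⟩
    add_mem' := by
      rintro a b ⟨T1, h1, rfl⟩ ⟨T2, h2, rfl⟩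
      refine ⟨T1 + T2, fun t ht => ?_, Multiset.sum_add T1 T2⟩
      rcases Multiset.mem_add.1 ht with h | h
      · exact h1 t h
      · exact h2 t h
    neg_mem' := by
      rintro a ⟨T, hT, rfl⟩
      refine ⟨T.bind fun t => Multiset.replicate (addOrderOf t - 1) t, fun t ht => ?_,
        sum_negRep T⟩
      obtain ⟨s, hs, ht'⟩ := Multiset.mem_bind.1 ht
      rw [Multiset.eq_of_mem_replicate ht']
      exact hT s hs }
  exact (AddSubgroup.closure_le M).mpr (fun e he => ⟨{e}, by simp [he]⟩) hx


lemma card_smul_zero_zmod_le (p n : ℕ) (hp : 0 < p) (hn : 0 < n) :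
    Nat.card {z : ZMod n // p • z = 0} ≤ p := by
  haveI : NeZero n := ⟨hn.ne'⟩
  have key : ∀ z : {z : ZMod n // p • z = 0}, (z : ZMod n).val * p = (z : ZMod n).val * p / n * n := by
    intro z
    have h2 : (((z : ZMod n).val * p : ℕ) : ZMod n) = 0 := by
      push_cast
      rw [ZMod.natCast_zmod_val, mul_comm, ← nsmul_eq_mul]
      exact z.prop
    have h3 : n ∣ (z : ZMod n).val * p := (ZMod.natCast_eq_zero_iff _ _).mp h2
    exact (Nat.div_mul_cancel h3).symm
  let f : {z : ZMod n // p • z = 0} → Fin p := fun z =>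
    ⟨(z : ZMod n).val * p / n, by
      rw [Nat.div_lt_iff_lt_mul hn, mul_comm p n]
      exact Nat.mul_lt_mul_of_pos_right (ZMod.val_lt _) hp⟩
  have hf : Function.Injective f := by
    intro z1 z2 h
    have h1 : ((z1 : ZMod n).val * p / n) = ((z2 : ZMod n).val * p / n) := congrArg Fin.val h
    have h2 : (z1 : ZMod n).val * p = (z2 : ZMod n).val * p := by
      rw [key z1, key z2, h1]
    exact Subtype.ext (ZMod.val_injective n (Nat.eq_of_mul_eq_mul_right hp h2))
  calc Nat.card {z : ZMod n // p • z = 0} ≤ Nat.card (Fin p) := Nat.card_le_card_of_injective f hf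
    _ = p := Nat.card_eq_fintype_card.trans (Fintype.card_fin p)


lemma card_p_torsion_le {G : Type*} [AddCommGroup G] (r : ℕ) (hr : IsRank G r)
    (p : ℕ) (hp : 0 < p) : Nat.card {x : G // p • x = 0} ≤ p ^ r := by
  obtain ⟨d, hd1, _, ⟨e⟩⟩ := hr
  have key : ∀ x : G, p • x = 0 ↔ p • (e x) = 0 := fun x => by
    rw [← map_nsmul e p x]
    exact (map_eq_zero_iff e e.injective).symm
  have e1 : {x : G // p • x = 0} ≃ {y : (∀ i, ZMod (d i)) // p • y = 0} :=
    e.toEquiv.subtypeEquiv (fun x => key x)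
  have e2 : {y : (∀ i, ZMod (d i)) // p • y = 0} ≃ ∀ i, {z : ZMod (d i) // p • z = 0} := by
    refine (Equiv.subtypeEquiv (Equiv.refl _) (fun y => ?_)).trans Equiv.subtypePiEquivPi
    simp [funext_iff]
  rw [Nat.card_congr (e1.trans e2), Nat.card_pi]
  calc (∏ i, Nat.card {z : ZMod (d i) // p • z = 0}) ≤ ∏ _i : Fin r, p :=
      Finset.prod_le_prod (fun _ _ => Nat.zero_le _)
        (fun i _ => card_smul_zero_zmod_le p (d i) hp (Nat.zero_lt_one.trans (hd1 i)))
    _ = p ^ r := by simp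


lemma exists_small_generating_subset {G : Type*} [AddCommGroup G] [Fintype G] [DecidableEq G]
    (r : ℕ) (hr : IsRank G r) (p : ℕ) (hp : p.Prime) (E : Set G) {h : G}
    (hh : h ∈ AddSubgroup.closure E) (hph : ∃ k, p ^ k • h = 0) :
    ∃ F : Finset G, ↑F ⊆ E ∧ F.card ≤ r ∧ h ∈ AddSubgroup.closure (F : Set G) := by
  classical
  set N := Fintype.card G with hN
  have hN0 : N ≠ 0 := Fintype.card_ne_zero
  set K := N.factorization p with hK
  set q := p ^ K with hq
  set m' := N / q with hm'
  have hq0 : 0 < q := pow_pos hp.pos K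
  have hqm' : q * m' = N := Nat.ordProj_mul_ordCompl_eq_self N p
  have hm'0 : 0 < m' := Nat.ordCompl_pos p hN0
  have hpm' : ¬ p ∣ m' := Nat.not_dvd_ordCompl hp hN0
  set c := m' ^ q.totient with hc
  have hm'c : m' ∣ c := dvd_pow_self m' (Nat.totient_pos.mpr hq0).ne'
  have hcop : Nat.Coprime m' q := ((hp.coprime_iff_not_dvd.mpr hpm').symm.pow_right K)
  have hc1 : c ≡ 1 [MOD q] := Nat.ModEq.pow_totient hcop
  have hc0 : 0 < c := pow_pos hm'0 _
  have hqdvd : q ∣ c - 1 := (Nat.modEq_iff_dvd' hc0).mp hc1.symm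
  -- q • (c • x) = 0 for all x
  have hqc : ∀ x : G, q • (c • x) = 0 := by
    intro x
    rw [← mul_nsmul]
    have h0 : N ∣ q * c := by rw [← hqm']; exact mul_dvd_mul_left q hm'c
    have h1 : addOrderOf x ∣ c * q := dvd_trans (addOrderOf_dvd_card) (h0.trans (mul_comm q c).dvd)
    exact addOrderOf_dvd_iff_nsmul_eq_zero.mp h1
  -- c • h = h
  have hch : c • h = h := by
    obtain ⟨k, hk⟩ := hph
    have hordh : addOrderOf h ∣ q := by
      have h1 : addOrderOf h ∣ p ^ k := addOrderOf_dvd_iff_nsmul_eq_zero.mpr hk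
      have h2 : addOrderOf h ∣ q * m' := hqm' ▸ addOrderOf_dvd_card
      have h3 : Nat.Coprime (addOrderOf h) m' :=
        Nat.Coprime.coprime_dvd_left h1 (((hp.coprime_iff_not_dvd.mpr hpm')).pow_left k)
      exact (Nat.Coprime.dvd_of_dvd_mul_right h3 (mul_comm q m' ▸ h2))
    have : c • h = ((c - 1) + 1) • h := by rw [Nat.sub_add_cancel hc0]
    rw [this, add_nsmul, one_nsmul]
    have : (c - 1) • h = 0 :=
      addOrderOf_dvd_iff_nsmul_eq_zero.mp (dvd_trans hordh hqdvd)
    rw [this, zero_add]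
  -- the family of candidate finsets
  let pred : Finset G → Prop := fun F =>
    (∀ f ∈ F, ∃ e ∈ E, f = c • e) ∧ h ∈ AddSubgroup.closure (F : Set G)
  have hEx : ∃ n, ∃ F : Finset G, pred F ∧ F.card = n := by
    let φ : G →+ G := AddMonoidHom.mk' (fun x => c • x) (fun a b => nsmul_add a b c)
    refine ⟨_, Finset.image (fun x => c • x) (Set.toFinite E).toFinset, ⟨⟨?_, ?_⟩, rfl⟩⟩
    · intro f hf
      obtain ⟨e, he, rfl⟩ := Finset.mem_image.mp hf
      exact ⟨e, (Set.Finite.mem_toFinset _).mp he, rfl⟩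
    · have himg : ((Finset.image (fun x => c • x) (Set.toFinite E).toFinset : Finset G) : Set G)
          = φ '' E := by
        rw [Finset.coe_image, Set.Finite.coe_toFinset]; rfl
      rw [himg, ← AddMonoidHom.map_closure φ E]
      exact ⟨h, hh, hch⟩
  obtain ⟨F, hF, hFcard⟩ := Nat.find_spec hEx
  have hmin : ∀ F' : Finset G, pred F' → Nat.find hEx ≤ F'.card := fun F' h' =>
    Nat.find_min' hEx ⟨F', h', rfl⟩
  have herase : ∀ f ∈ F, h ∉ AddSubgroup.closure ((F.erase f : Finset G) : Set G) := by
    intro f hf hcl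
    have h1 : pred (F.erase f) := ⟨fun x hx => hF.1 x (Finset.mem_of_mem_erase hx), hcl⟩
    have h2 := hmin _ h1
    rw [Finset.card_erase_of_mem hf, hFcard] at h2
    have h3 : 0 < F.card := Finset.card_pos.mpr ⟨f, hf⟩
    omega
  -- all elements of F are killed by q (as integer smul)
  have hqF : ∀ f ∈ F, ((p : ℤ) ^ K) • f = 0 := by
    intro f hf
    obtain ⟨e, _, rfl⟩ := hF.1 f hf
    have h1 := hqc e
    have : ((p : ℤ) ^ K) • (c • e) = (q • (c • e) : G) := by
      rw [← natCast_zsmul]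
      norm_cast
    rw [this, h1]
  set P : AddSubgroup G := AddSubgroup.closure (F : Set G) with hPdef
  let μ : P →+ P := AddMonoidHom.mk' (fun x => p • x) (fun a b => smul_add p a b)
  have hQker : Nat.card (P ⧸ μ.range) = Nat.card μ.ker := by
    have h1 := AddSubgroup.card_eq_card_quotient_mul_card_addSubgroup (μ.range)
    have h2 := AddSubgroup.card_eq_card_quotient_mul_card_addSubgroup (μ.ker)
    have h3 : Nat.card (P ⧸ μ.ker) = Nat.card μ.range :=
      Nat.card_congr (QuotientAddGroup.quotientKerEquivRange μ).toEquiv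
    have h4 : 0 < Nat.card μ.range := Nat.card_pos
    refine Nat.eq_of_mul_eq_mul_left h4 ?_
    rw [mul_comm (Nat.card μ.range) (Nat.card (P ⧸ μ.range)), ← h1, h2, h3]
  have hker : Nat.card μ.ker ≤ Nat.card {x : G // p • x = 0} := by
    refine Nat.card_le_card_of_injective (fun z => ⟨((z : P) : G), ?_⟩) ?_
    · have hz : μ (z : P) = 0 := z.prop
      have hz' : p • ((z : P) : G) = (((p • (z : P) : P)) : G) := by push_cast; rfl
      rw [hz']
      exact congrArg Subtype.val hz
    · intro z1 z2 hz
      have h1 := congrArg Subtype.val hz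
      simp only at h1
      exact Subtype.ext (Subtype.ext h1)
  -- extended coefficient functions
  let Cext : ({x // x ∈ F} → Fin p) → G → ℤ := fun c' x =>
    if hx : x ∈ F then ((c' ⟨x, hx⟩ : ℕ) : ℤ) else 0
  let emb : {x // x ∈ F} → P := fun f => ⟨(f : G), AddSubgroup.subset_closure f.prop⟩
  let S : ({x // x ∈ F} → Fin p) → P := fun c' => ∑ f ∈ F.attach, ((c' f : ℕ)) • emb f
  have hS : ∀ c', ((S c' : P) : G) = ∑ i ∈ F, (Cext c' i) • i := by
    intro c'
    have h1 : ((S c' : P) : G) = ∑ f ∈ F.attach, ((c' f : ℕ)) • ((f : G)) := by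
      rw [show ((S c' : P) : G) = P.subtype (S c') from rfl, map_sum]
      refine Finset.sum_congr rfl (fun f _ => ?_)
      rw [map_nsmul]
      rfl
    rw [h1, ← Finset.sum_attach F (fun i => (Cext c' i) • i)]
    refine Finset.sum_congr rfl (fun f _ => ?_)
    have : Cext c' (f : G) = ((c' f : ℕ) : ℤ) := by
      simp only [Cext, dif_pos f.prop]
    rw [this, natCast_zsmul]
  let θ : ({x // x ∈ F} → Fin p) → P ⧸ μ.range := fun c' => QuotientAddGroup.mk (S c')
  have hθ : Function.Injective θ := by
    intro c1 c2 h12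
    by_contra hne
    obtain ⟨f0, hf0⟩ : ∃ f : {x // x ∈ F}, c1 f ≠ c2 f := by
      by_contra hx; push_neg at hx; exact hne (funext hx)
    have h12' : -(S c1) + S c2 ∈ μ.range := QuotientAddGroup.eq.mp h12
    obtain ⟨y, hy⟩ := h12'
    -- pass to G with integer coefficients
    have hyG : (p : ℤ) • (y : G) = ∑ i ∈ F, (Cext c2 i - Cext c1 i) • i := by
      have h1 : (((μ y : P)) : G) = ((((-(S c1) + S c2) : P)) : G) := congrArg Subtype.val hy
      have h2 : (((μ y : P)) : G) = p • ((y : P) : G) := by push_cast; rfl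
      have h3 : ((((-(S c1) + S c2) : P)) : G) = -((S c1 : P) : G) + ((S c2 : P) : G) := by
        push_cast; ring
      rw [h2, h3, hS, hS] at h1
      rw [← natCast_zsmul] at h1
      rw [h1, neg_add_eq_sub, ← Finset.sum_sub_distrib]
      refine Finset.sum_congr rfl (fun i _ => ?_)
      rw [sub_smul]
    obtain ⟨b, hb⟩ : ∃ b : G → ℤ, ∑ i ∈ F, b i • i = (y : G) := by
      have h1 : (y : G) ∈ AddSubgroup.closure (F : Set G) := y.prop
      rw [← Submodule.span_int_eq_addSubgroupClosure, Submodule.mem_toAddSubgroup] at h1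
      obtain ⟨b, -, hb⟩ := Submodule.mem_span_finset.mp h1
      exact ⟨b, hb⟩
    set W : G → ℤ := fun i => Cext c2 i - Cext c1 i - p * b i with hW
    have main : ∑ i ∈ F, W i • i = 0 := by
      have : ∑ i ∈ F, W i • i
          = ∑ i ∈ F, (Cext c2 i - Cext c1 i) • i - (p : ℤ) • ∑ i ∈ F, b i • i := by
        rw [Finset.smul_sum, ← Finset.sum_sub_distrib]
        refine Finset.sum_congr rfl (fun i _ => ?_)
        rw [hW, sub_smul, mul_smul]
      rw [this, hb, ← hyG, sub_self]
    set i0 : G := (f0 : G) with hi0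
    set Kc : AddSubgroup G := AddSubgroup.closure ((F.erase i0 : Finset G) : Set G) with hKc
    have hWK : W i0 • i0 ∈ Kc := by
      have h1 : W i0 • i0 + ∑ i ∈ F.erase i0, W i • i = ∑ i ∈ F, W i • i :=
        Finset.add_sum_erase F (fun i => W i • i) f0.prop
      rw [main] at h1
      have h2 : W i0 • i0 = -∑ i ∈ F.erase i0, W i • i := eq_neg_of_add_eq_zero_left h1
      rw [h2]
      refine neg_mem (AddSubgroup.sum_mem _ (fun i hi => ?_))
      exact AddSubgroup.zsmul_mem _ (AddSubgroup.subset_closure (by exact_mod_cast hi)) _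
    have hpW : ¬ (p : ℤ) ∣ W i0 := by
      intro hdvd
      have h1 : (p : ℤ) ∣ Cext c2 i0 - Cext c1 i0 := by
        have : Cext c2 i0 - Cext c1 i0 = W i0 + p * b i0 := by rw [hW]; ring
        rw [this]
        exact dvd_add hdvd (Dvd.intro _ rfl)
      have h2 : |Cext c2 i0 - Cext c1 i0| < (p : ℤ) := by
        have hb1 : Cext c1 i0 = ((c1 f0 : ℕ) : ℤ) := by simp only [Cext]; exact dif_pos f0.prop
        have hb2 : Cext c2 i0 = ((c2 f0 : ℕ) : ℤ) := by simp only [Cext]; exact dif_pos f0.prop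
        rw [hb1, hb2]
        have := (c1 f0).isLt
        have := (c2 f0).isLt
        rw [abs_lt]
        constructor <;> [skip; skip] <;> push_cast <;> omega
      have h3 : Cext c2 i0 - Cext c1 i0 = 0 := Int.eq_zero_of_abs_lt_dvd h1 h2
      apply hf0
      have hb1 : Cext c1 i0 = ((c1 f0 : ℕ) : ℤ) := by simp only [Cext]; exact dif_pos f0.prop
      have hb2 : Cext c2 i0 = ((c2 f0 : ℕ) : ℤ) := by simp only [Cext]; exact dif_pos f0.prop
      rw [hb1, hb2, sub_eq_zero] at h3
      exact Fin.ext (by exact_mod_cast h3.symm)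
    have hcp : IsCoprime (W i0) ((p : ℤ) ^ K) := by
      have hprime : Prime (p : ℤ) := Int.prime_iff_natAbs_prime.mpr (by simpa using hp)
      exact ((hprime.coprime_iff_not_dvd.mpr hpW).pow_left).symm
    obtain ⟨u, v, huv⟩ := hcp
    have hq0' : ((p : ℤ) ^ K) • i0 = 0 := hqF i0 f0.prop
    have hi0K : i0 ∈ Kc := by
      have h1 : (1 : ℤ) • i0 = u • (W i0 • i0) + v • (((p : ℤ) ^ K) • i0) := by
        rw [← huv, add_smul, mul_smul, mul_smul]
      rw [hq0', smul_zero, add_zero, one_smul] at h1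
      rw [h1]
      exact AddSubgroup.zsmul_mem _ hWK _
    have hFK : AddSubgroup.closure (F : Set G) ≤ Kc := by
      rw [AddSubgroup.closure_le]
      intro x hx
      by_cases hxi : x = i0
      · rw [hxi]; exact hi0K
      · exact AddSubgroup.subset_closure (by
          rw [Finset.coe_erase]
          exact ⟨hx, hxi⟩)
    exact herase i0 f0.prop (hFK hF.2)
  have hcard : p ^ F.card ≤ p ^ r := by
    calc p ^ F.card = Nat.card ({x // x ∈ F} → Fin p) := by
          rw [Nat.card_eq_fintype_card, Fintype.card_fun, Fintype.card_fin, Fintype.card_coe]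
      _ ≤ Nat.card (P ⧸ μ.range) := Nat.card_le_card_of_injective θ hθ
      _ = Nat.card μ.ker := hQker
      _ ≤ Nat.card {x : G // p • x = 0} := hker
      _ ≤ p ^ r := card_p_torsion_le r hr p hp.pos
  have hFr : F.card ≤ r := (Nat.pow_le_pow_iff_right hp.one_lt).mp hcard
  -- choose preimages
  let ρ : G → G := fun f => if hf : ∃ e ∈ E, f = c • e then hf.choose else 0
  refine ⟨F.image ρ, ?_, le_trans (Finset.card_image_le) hFr, ?_⟩
  · intro x hx
    obtain ⟨f, hf, rfl⟩ := Finset.mem_image.mp (by exact_mod_cast hx)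
    have hef := hF.1 f hf
    simp only [ρ, dif_pos hef]
    exact hef.choose_spec.1
  · have hle : AddSubgroup.closure (F : Set G) ≤ AddSubgroup.closure ((F.image ρ : Finset G) : Set G) := by
      rw [AddSubgroup.closure_le]
      intro x hx
      have hxF : x ∈ F := by exact_mod_cast hx
      have hef := hF.1 x hxF
      have hx2 : x = c • (ρ x) := by
        simp only [ρ, dif_pos hef]
        exact hef.choose_spec.2
      rw [hx2]
      exact AddSubgroup.nsmul_mem _
        (AddSubgroup.subset_closure (by exact_mod_cast Finset.mem_image_of_mem ρ hxF)) _
    exact hle hF.2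


end AuxiliaryLemmas

theorem exists_atom_coprime_multiplicity
    (G : Type*) [AddCommGroup G] [Fintype G] [DecidableEq G] (r : ℕ)
    (hr : IsRank G r) (G₀ : Set G) (g : G)
    (hg : g ∈ G₀) (hg0 : g ≠ 0)
    (hgen : g ∈ AddSubgroup.closure (G₀ \ {g}))
    (p : ℕ) (hp : p.Prime) (hpord : p ∣ addOrderOf g) :
    ∃ A : Multiset G, IsAtomOver G₀ A ∧
      2 ≤ A.toFinset.card ∧ A.toFinset.card ≤ r + 1 ∧
      1 ≤ Multiset.count g A ∧ Multiset.count g A ≤ addOrderOf g / 2 ∧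
      Multiset.count g A ∣ addOrderOf g ∧ ¬ p ∣ Multiset.count g A := by
  classical
  set E : Set G := G₀ \ {g} with hE
  set n := addOrderOf g with hn
  have hn0 : 0 < n := addOrderOf_pos g
  set k := n.factorization p with hk
  have hk1 : 0 < k := hp.factorization_pos_of_dvd hn0.ne' hpord
  set m := n / p ^ k with hm
  have hm0 : 0 < m := Nat.ordCompl_pos p hn0.ne'
  have hpm : ¬ p ∣ m := Nat.not_dvd_ordCompl hp hn0.ne'
  have hmn : m ∣ n := Nat.ordCompl_dvd n p
  have hmul : p ^ k * m = n := Nat.ordProj_mul_ordCompl_eq_self n p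
  have hpk2 : 2 ≤ p ^ k := le_trans hp.two_le (Nat.le_self_pow hk1.ne' p)
  have hm2 : m ≤ n / 2 := Nat.div_le_div_left hpk2 two_pos
  have hmlt : m < n := lt_of_le_of_lt hm2 (Nat.div_lt_self hn0 one_lt_two)
  set h : G := m • g with hh
  have hhcl : h ∈ AddSubgroup.closure E := AddSubgroup.nsmul_mem _ hgen m
  have hph : ∃ j, p ^ j • h = 0 := by
    refine ⟨k, ?_⟩
    rw [hh, ← mul_nsmul]
    have : (m * p ^ k) • g = n • g := by rw [mul_comm, hmul]
    rw [this, hn, addOrderOf_nsmul_eq_zero]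
  obtain ⟨F, hFE, hFr, hFh⟩ := exists_small_generating_subset r hr p hp E hhcl hph
  set H : AddSubgroup G := AddSubgroup.closure (F : Set G) with hH
  have hdEx : ∃ e, 0 < e ∧ e • g ∈ H := ⟨m, hm0, hFh⟩
  set d := Nat.find hdEx with hdd
  obtain ⟨hd0, hdH⟩ := Nat.find_spec hdEx
  have hdm : d ≤ m := Nat.find_min' hdEx ⟨hm0, hFh⟩
  have hddvd : d ∣ m := by
    by_contra hnd
    have hmod0 : m % d ≠ 0 := fun hc => hnd (Nat.dvd_of_mod_eq_zero hc)
    have hmodlt : m % d < d := Nat.mod_lt m hd0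
    have hmem : (m % d) • g ∈ H := by
      have hsplit : d * (m / d) + m % d = m := Nat.div_add_mod m d
      have h0 : m • g = (d * (m / d)) • g + (m % d) • g := by
        conv_lhs => rw [← hsplit]
        rw [add_nsmul]
      have h1 : (m % d) • g = m • g - (d * (m / d)) • g := by rw [h0]; abel
      have h2 : (d * (m / d)) • g = (m / d) • (d • g) := by rw [mul_nsmul]
      rw [h1, h2]
      exact sub_mem hFh (AddSubgroup.nsmul_mem _ hdH _)
    exact Nat.find_min hdEx hmodlt ⟨Nat.pos_of_ne_zero hmod0, hmem⟩
  have hdn : d ∣ n := hddvd.trans hmn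
  have hpd : ¬ p ∣ d := fun hc => hpm (hc.trans hddvd)
  have hd2 : d ≤ n / 2 := hdm.trans hm2
  have hdg0 : d • g ≠ 0 := by
    intro hc
    have h1 : n ∣ d := addOrderOf_dvd_iff_nsmul_eq_zero.mpr hc
    have := Nat.le_of_dvd hd0 h1
    omega
  -- choose a minimal-length multiset over F with sum -(d • g)
  have hTEx : ∃ nn, ∃ T : Multiset G,
      ((∀ t ∈ T, t ∈ (F : Set G)) ∧ T.sum = -(d • g)) ∧ Multiset.card T = nn := by
    obtain ⟨T, hT1, hT2⟩ := exists_multiset_of_mem_closure (neg_mem hdH)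
    exact ⟨_, T, ⟨hT1, hT2⟩, rfl⟩
  obtain ⟨T, ⟨hTF, hTsum⟩, hTcard⟩ := Nat.find_spec hTEx
  have hTmin : ∀ T' : Multiset G, (∀ t ∈ T', t ∈ (F : Set G)) → T'.sum = -(d • g) →
      Multiset.card T ≤ Multiset.card T' := fun T' h1 h2 =>
    hTcard ▸ Nat.find_min' hTEx ⟨T', ⟨h1, h2⟩, rfl⟩
  have hgF : g ∉ (F : Set G) := fun hc => (hFE hc).2 rfl
  have hgT : Multiset.count g T = 0 := Multiset.count_eq_zero.mpr (fun hc => hgF (hTF g hc))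
  set A : Multiset G := Multiset.replicate d g + T with hA
  have hcount : Multiset.count g A = d := by
    rw [hA, Multiset.count_add, Multiset.count_replicate, if_pos rfl, hgT, add_zero]
  have hAsum : A.sum = 0 := by
    rw [hA, Multiset.sum_add, Multiset.sum_replicate, hTsum]
    exact add_neg_cancel _
  have hgA : g ∈ A := by
    rw [hA]
    exact Multiset.mem_add.mpr (Or.inl (Multiset.mem_replicate.mpr ⟨hd0.ne', rfl⟩))
  have hA0 : A ≠ 0 := fun hc => by simp [hc] at hgA
  have hT0 : T ≠ 0 := by
    intro hc
    rw [hc, Multiset.sum_zero] at hTsum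
    exact hdg0 (neg_eq_zero.mp hTsum.symm)
  have hAG₀ : ∀ x ∈ A, x ∈ G₀ := by
    intro x hx
    rcases Multiset.mem_add.mp hx with hx | hx
    · rw [Multiset.eq_of_mem_replicate hx]; exact hg
    · exact (hFE (hTF x hx)).1
  -- atom property
  have hatom : ∀ B : Multiset G, B ≤ A → B ≠ 0 → B ≠ A → B.sum ≠ 0 := by
    intro B hBle hB0 hBA hBsum
    set e := Multiset.count g B with he
    set B' := Multiset.filter (fun x => ¬ x = g) B with hB'
    have hBsplit : B = Multiset.replicate e g + B' := by
      rw [he, hB', ← Multiset.filter_eq' B g]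
      exact (Multiset.filter_add_not _ B).symm
    have hB'le : B' ≤ T := by
      rw [Multiset.le_iff_count]
      intro x
      rw [hB', Multiset.count_filter]
      by_cases hx : x = g
      · simp [hx]
      · rw [if_pos hx]
        have h1 := Multiset.count_le_of_le x hBle
        rw [hA, Multiset.count_add, Multiset.count_replicate,
          if_neg (fun hc : g = x => hx hc.symm), zero_add] at h1
        exact h1
    have hB'sum : e • g + B'.sum = 0 := by
      rw [← Multiset.sum_replicate, ← Multiset.sum_add, ← hBsplit]
      exact hBsum
    have hB'H : B'.sum ∈ H := by
      refine multiset_sum_mem B' (fun t ht => ?_)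
      exact AddSubgroup.subset_closure (hTF t (Multiset.mem_of_le hB'le ht))
    have heH : e • g ∈ H := by
      have h1 : e • g = -B'.sum := eq_neg_of_add_eq_zero_left hB'sum
      rw [h1]; exact neg_mem hB'H
    have hed : e ≤ d := by
      have h1 := Multiset.count_le_of_le g hBle
      rw [hcount] at h1
      exact h1
    have he0d : e = 0 ∨ e = d := by
      by_contra hc
      push_neg at hc
      have h1 : e < d := lt_of_le_of_ne hed hc.2
      exact Nat.find_min hdEx h1 ⟨Nat.pos_of_ne_zero hc.1, heH⟩
    rcases he0d with he0 | hede
    · -- B has no g, so it is a proper zero-sum subsequence of T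
      have hBT : B ≤ T := by
        rw [hBsplit, he0, Multiset.replicate_zero, zero_add]
        exact hB'le
      have hBsum0 : B.sum = 0 := hBsum
      have hTBprop : ∀ t ∈ T - B, t ∈ (F : Set G) :=
        fun t ht => hTF t (Multiset.mem_of_le (Multiset.sub_le_self T B) ht)
      have hTBsum : (T - B).sum = -(d • g) := by
        have h1 : T - B + B = T := tsub_add_cancel_of_le hBT
        have h2 : (T - B).sum + B.sum = T.sum := by rw [← Multiset.sum_add, h1]
        rw [hBsum0, add_zero] at h2
        rw [h2, hTsum]
      have h3 := hTmin (T - B) hTBprop hTBsum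
      have h4 : Multiset.card (T - B) = Multiset.card T - Multiset.card B := by
        rw [Multiset.card_sub hBT]
      have h5 : 0 < Multiset.card B := Multiset.card_pos.mpr hB0
      have h6 : Multiset.card B ≤ Multiset.card T := Multiset.card_le_card hBT
      omega
    · -- B contains g exactly d times; then B' = T and B = A
      have hB'sum2 : B'.sum = -(d • g) := by
        rw [← hede]
        exact eq_neg_of_add_eq_zero_right hB'sum
      have h1 : Multiset.card T ≤ Multiset.card B' :=
        hTmin B' (fun t ht => hTF t (Multiset.mem_of_le hB'le ht)) hB'sum2
      have h2 : B' = T := Multiset.eq_of_le_of_card_le hB'le h1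
      apply hBA
      rw [hBsplit, hede, h2]
  -- support
  have hAfin : A.toFinset = insert g T.toFinset := by
    rw [hA, Multiset.toFinset_add, Multiset.toFinset_replicate, if_neg hd0.ne']
    rfl
  have hTsubF : T.toFinset ⊆ F := fun t ht => Multiset.mem_toFinset.mp ht |> hTF t |> id
  have hcard2 : 2 ≤ A.toFinset.card := by
    obtain ⟨t, ht⟩ := Multiset.exists_mem_of_ne_zero hT0
    have htg : t ≠ g := fun hc => hgF (hc ▸ hTF t ht)
    refine Finset.one_lt_card.mpr ⟨g, ?_, t, ?_, fun hc => htg hc.symm⟩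
    · rw [Multiset.mem_toFinset] at *; exact hgA
    · rw [Multiset.mem_toFinset]; exact Multiset.mem_add.mpr (Or.inr ht)
  have hcardr : A.toFinset.card ≤ r + 1 := by
    rw [hAfin]
    calc (insert g T.toFinset).card ≤ T.toFinset.card + 1 := Finset.card_insert_le g _
      _ ≤ F.card + 1 := by
        have := Finset.card_le_card hTsubF
        omega
      _ ≤ r + 1 := by omega
  exact ⟨A, ⟨⟨hAG₀, hAsum⟩, hA0, hatom⟩, hcard2, hcardr, by omega, by rw [hcount]; exact hd2,
    by rw [hcount]; exact hdn, by rw [hcount]; exact hpd⟩
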